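/- Let Γ be a Neumaier graph with parameters (n,k,λ;a,c) and let E be its edge set. Then twice the number of edges of Γ satisfies 2·|E| ≥ 2k(k−λ) + 2(k−c+1)(a−1) + (k−c+1)(λ−a+1) + (c−1)(c−2); that is, Γ has at least k(k−λ) + (k−c+1)(a−1) + (k−c+1)(λ−a+1)/2 + (c−1)(c−2)/2 edges. -/

import Mathlib

open Finset SimpleGraph Matrix

/-- A finset `C` is a regular clique with nexus `a` in `G`: it is a clique and every
vertex outside `C` has exactly `a` neighbors in `C`. -/
def SimpleGraph.IsRegularCliqueWithNexus {V : Type*} [Fintype V] [DecidableEq V]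
    (G : SimpleGraph V) [DecidableRel G.Adj] (C : Finset V) (a : ℕ) : Prop :=
  G.IsClique (C : Set V) ∧ ∀ v ∉ C, (C.filter fun u => G.Adj v u).card = a

/-- `G` is edge-regular with parameters `(n, k, l)`: it has `n` vertices, is `k`-regular,
and any two adjacent vertices have exactly `l` common neighbors. -/
def SimpleGraph.IsEdgeRegular {V : Type*} [Fintype V] [DecidableEq V]
    (G : SimpleGraph V) [DecidableRel G.Adj] (n k l : ℕ) : Prop :=
  Fintype.card V = n ∧ G.IsRegularOfDegree k ∧
    ∀ u v : V, G.Adj u v → Fintype.card (G.commonNeighbors u v) = l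

/-- `G` is a Neumaier graph with parameters `(n, k, l; a, c)`: a connected, non-complete,
edge-regular graph with parameters `(n, k, l)` containing a regular clique of size `c`
with nexus `a ≥ 1`. -/
def SimpleGraph.IsNeumaier {V : Type*} [Fintype V] [DecidableEq V]
    (G : SimpleGraph V) [DecidableRel G.Adj] (n k l a c : ℕ) : Prop :=
  G.Connected ∧ G ≠ ⊤ ∧ G.IsEdgeRegular n k l ∧ 1 ≤ a ∧
    ∃ C : Finset V, C.card = c ∧ G.IsRegularCliqueWithNexus C a

/-- Auxiliary: common neighbors as a finset intersection. -/
private lemma commonNeighbors_finset {V : Type*} [Fintype V] [DecidableEq V]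
    (G : SimpleGraph V) [DecidableRel G.Adj] {l : ℕ} (u v : V)
    (h : Fintype.card (G.commonNeighbors u v) = l) :
    (G.neighborFinset u ∩ G.neighborFinset v).card = l := by
  rw [← h, ← Set.toFinset_card]
  congr 1
  simp [commonNeighbors, neighborFinset, Set.toFinset_inter]
  ext w
  change w ∈ _ ↔ w ∈ (G.commonNeighbors u v).toFinset
  rw [Set.mem_toFinset]
  simp [commonNeighbors]

/-- Auxiliary: a connected non-complete graph has an edge. -/
private lemma exists_adj_of_connected {V : Type*} [Fintype V] [DecidableEq V]
    (G : SimpleGraph V) [DecidableRel G.Adj]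
    (hc : G.Connected) (hne : G ≠ ⊤) : ∃ u y, G.Adj u y := by
  have : Nontrivial V := by
    by_contra hns
    have : Subsingleton V := not_nontrivial_iff_subsingleton.mp hns
    exact hne (by ext u v; simp [Subsingleton.elim u v])
  obtain ⟨u, v, huv⟩ := exists_pair_ne V
  obtain ⟨w⟩ := hc u v
  cases w with
  | nil => exact absurd rfl huv
  | cons h p => exact ⟨_, _, h⟩

/-- Auxiliary: vertex count lower bound `n ≥ 2k - l` for edge-regular graphs with an edge. -/
private lemma vertex_lower_bound {V : Type*} [Fintype V] [DecidableEq V]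
    (G : SimpleGraph V) [DecidableRel G.Adj] {n k l : ℕ}
    (hcard : Fintype.card V = n) (hreg : G.IsRegularOfDegree k)
    (u y : V) (hadj : G.Adj u y)
    (hcomF : (G.neighborFinset u ∩ G.neighborFinset y).card = l) :
    (n : ℤ) ≥ 2 * k - l := by
  set A : Finset V := insert u (G.neighborFinset u) with hA
  set B : Finset V := G.neighborFinset y \ A with hB
  have hAcard : A.card = k + 1 := by
    rw [hA, Finset.card_insert_of_notMem (by simp), G.card_neighborFinset_eq_degree, hreg u]
  have hint : (G.neighborFinset y ∩ A).card = l + 1 := by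
    have : G.neighborFinset y ∩ A = insert u (G.neighborFinset u ∩ G.neighborFinset y) := by
      rw [hA, Finset.inter_insert_of_mem (by simp [G.adj_comm] at *; exact hadj)]
      rw [Finset.inter_comm]
    rw [this, Finset.card_insert_of_notMem (by simp), hcomF]
  have hBcard : B.card + (l + 1) = k := by
    rw [hB, ← hint, Finset.card_sdiff_add_card_inter, G.card_neighborFinset_eq_degree, hreg y]
  have hdisj : Disjoint A B := Finset.disjoint_sdiff
  have hunion : A.card + B.card ≤ n := by
    rw [← Finset.card_union_of_disjoint hdisj, ← hcard]
    exact Finset.card_le_univ _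
  omega

/-- Auxiliary: the key Neumaier parameter identity `(k-c+1)(a-1) = (c-1)(l-c+2)`. -/
private lemma neumaier_identity {V : Type*} [Fintype V] [DecidableEq V]
    (G : SimpleGraph V) [DecidableRel G.Adj] {k l a c : ℕ}
    (hreg : G.IsRegularOfDegree k) (ha : 1 ≤ a)
    (C : Finset V) (hCcard : C.card = c)
    (hclique : G.IsClique (C : Set V))
    (hnexus : ∀ v ∉ C, (C.filter fun w => G.Adj v w).card = a)
    (hcomF : ∀ u v : V, G.Adj u v → (G.neighborFinset u ∩ G.neighborFinset v).card = l)
    (u : V) (huC : u ∈ C) :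
    ((k : ℤ) - c + 1) * ((a : ℤ) - 1) = ((c : ℤ) - 1) * ((l : ℤ) - c + 2) := by
  have hc1 : 1 ≤ c := by rw [← hCcard]; exact Finset.card_pos.mpr ⟨u, huC⟩
  set D : Finset V := G.neighborFinset u \ C with hDdef
  have hCsub : C.erase u ⊆ G.neighborFinset u := by
    intro v hv
    rw [mem_neighborFinset]
    exact hclique huC (Finset.mem_of_mem_erase hv) (Ne.symm (Finset.ne_of_mem_erase hv))
  have hDeq : D = G.neighborFinset u \ C.erase u := by
    ext w
    simp only [hDdef, Finset.mem_sdiff, Finset.mem_erase, mem_neighborFinset]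
    constructor
    · rintro ⟨h1, h2⟩; exact ⟨h1, fun h => h2 h.2⟩
    · rintro ⟨h1, h2⟩
      refine ⟨h1, fun hw => ?_⟩
      exact h2 ⟨fun he => G.ne_of_adj h1 (he ▸ rfl), hw⟩
  have hCe : (C.erase u).card = c - 1 := by rw [Finset.card_erase_of_mem huC, hCcard]
  have hDcard : D.card + (c - 1) = k := by
    rw [hDeq, ← hCe, Finset.card_sdiff_add_card_eq_card hCsub,
      G.card_neighborFinset_eq_degree, hreg u]
  have hdc : ∑ y ∈ D, (((C.erase u).filter (fun v => G.Adj y v)).card : ℤ)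
           = ∑ v ∈ C.erase u, ((D.filter (fun y => G.Adj v y)).card : ℤ) := by
    simp only [Finset.card_filter]
    push_cast
    rw [Finset.sum_comm]
    refine Finset.sum_congr rfl fun v _ => Finset.sum_congr rfl fun y _ => ?_
    exact if_congr (G.adj_comm y v) rfl rfl
  have hy : ∀ y ∈ D, (((C.erase u).filter (fun v => G.Adj y v)).card : ℤ) = (a : ℤ) - 1 := by
    intro y hyD
    rw [hDdef, Finset.mem_sdiff, mem_neighborFinset] at hyD
    obtain ⟨hyN, hyC⟩ := hyD
    have h1 : (C.filter (fun v => G.Adj y v)).card = a := hnexus y hyC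
    have h2 : (C.erase u).filter (fun v => G.Adj y v)
        = (C.filter (fun v => G.Adj y v)).erase u := by
      rw [Finset.filter_erase]
    have hu_mem : u ∈ C.filter (fun v => G.Adj y v) :=
      Finset.mem_filter.mpr ⟨huC, hyN.symm⟩
    rw [h2, Finset.card_erase_of_mem hu_mem, h1]
    push_cast [Nat.cast_sub ha]
    ring
  have hv : ∀ v ∈ C.erase u, ((D.filter (fun y => G.Adj v y)).card : ℤ)
      = (l : ℤ) - c + 2 := by
    intro v hvE
    have hvC := Finset.mem_of_mem_erase hvE
    have hvu : v ≠ u := Finset.ne_of_mem_erase hvE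
    have hadj : G.Adj u v := hclique huC hvC (Ne.symm hvu)
    set W : Finset V := G.neighborFinset u ∩ G.neighborFinset v with hWdef
    have hW : W.card = l := hcomF u v hadj
    have hfilter : D.filter (fun y => G.Adj v y) = W \ C := by
      ext y
      simp only [hDdef, hWdef, Finset.mem_filter, Finset.mem_sdiff, Finset.mem_inter,
        mem_neighborFinset]
      tauto
    have hWC : W ∩ C = (C.erase u).erase v := by
      ext w
      simp only [hWdef, Finset.mem_inter, Finset.mem_erase, mem_neighborFinset]
      constructor
      · rintro ⟨⟨h1, h2⟩, h3⟩
        exact ⟨(G.ne_of_adj h2).symm, (G.ne_of_adj h1).symm, h3⟩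
      · rintro ⟨hwv, hwu, hwC⟩
        exact ⟨⟨hclique huC hwC (Ne.symm hwu), hclique hvC hwC (Ne.symm hwv)⟩, hwC⟩
    have h2c : 2 ≤ c := by
      rw [← hCcard]
      exact Finset.one_lt_card.mpr ⟨u, huC, v, hvC, (Ne.symm hvu)⟩
    have hWCcard : (W ∩ C).card + 2 = c := by
      rw [hWC, Finset.card_erase_of_mem (Finset.mem_erase.mpr ⟨hvu, hvC⟩), hCe]
      omega
    have hsd : (W \ C).card + (W ∩ C).card = W.card := Finset.card_sdiff_add_card_inter W C
    rw [hfilter]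
    omega
  rw [Finset.sum_congr rfl hy, Finset.sum_congr rfl hv, Finset.sum_const, Finset.sum_const,
    hCe] at hdc
  have hDk : (D.card : ℤ) = (k : ℤ) - c + 1 := by omega
  have hce : ((c - 1 : ℕ) : ℤ) = (c : ℤ) - 1 := by omega
  rw [nsmul_eq_mul, nsmul_eq_mul, hDk, hce] at hdc
  exact hdc

/-- Proposition 3.8: a Neumaier graph with parameters (n,k,l;a,c) has at least
k(k-l) + (k-c+1)(a-1) + (k-c+1)(l-a+1)/2 + (c-1)(c-2)/2 edges, i.e. twice the number of
edges is at least 2k(k-l) + 2(k-c+1)(a-1) + (k-c+1)(l-a+1) + (c-1)(c-2). -/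
theorem neumaier_edge_lower_bound {V : Type*} [Fintype V] [DecidableEq V]
    (G : SimpleGraph V) [DecidableRel G.Adj] (n k l a c : ℕ)
    (h : G.IsNeumaier n k l a c) :
    2 * (G.edgeFinset.card : ℤ) ≥
      2 * k * ((k : ℤ) - l) + 2 * ((k : ℤ) - c + 1) * ((a : ℤ) - 1) +
        ((k : ℤ) - c + 1) * ((l : ℤ) - a + 1) + ((c : ℤ) - 1) * ((c : ℤ) - 2) := by
  obtain ⟨hconn, hne, ⟨hcard, hreg, hcom⟩, ha, C, hCcard, hclique, hnexus⟩ := h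
  have hcomF : ∀ u v : V, G.Adj u v →
      (G.neighborFinset u ∩ G.neighborFinset v).card = l :=
    fun u v huv => commonNeighbors_finset G u v (hcom u v huv)
  -- handshake: 2|E| = n * k
  have hE : 2 * (G.edgeFinset.card : ℤ) = (n : ℤ) * k := by
    have := G.sum_degrees_eq_twice_card_edges
    rw [Finset.sum_congr rfl (fun v _ => hreg v), Finset.sum_const, smul_eq_mul,
      Finset.card_univ, hcard] at this
    exact_mod_cast this.symm
  -- an edge exists
  obtain ⟨x, y, hxy⟩ := exists_adj_of_connected G hconn hne
  have hnk : (n : ℤ) ≥ 2 * k - l :=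
    vertex_lower_bound G hcard hreg x y hxy (hcomF x y hxy)
  -- C is nonempty
  have hCne : C.Nonempty := by
    rcases Finset.eq_empty_or_nonempty C with hemp | hne'
    · exfalso
      have : Nonempty V := ⟨x⟩
      have h0 := hnexus x (by simp [hemp])
      simp [hemp] at h0
      omega
    · exact hne'
  obtain ⟨u, huC⟩ := hCne
  have hid := neumaier_identity G hreg ha C hCcard hclique hnexus hcomF u huC
  have hk0 : (0 : ℤ) ≤ (k : ℤ) := Nat.cast_nonneg k
  have h1 : (n : ℤ) * k ≥ (2 * k - l) * k := by
    exact mul_le_mul_of_nonneg_right hnk hk0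
  have h2 : ((2 : ℤ) * k - l) * k =
      2 * k * ((k : ℤ) - l) + 2 * ((k : ℤ) - c + 1) * ((a : ℤ) - 1) +
        ((k : ℤ) - c + 1) * ((l : ℤ) - a + 1) + ((c : ℤ) - 1) * ((c : ℤ) - 2) := by
    linear_combination (-1 : ℤ) * hid
  rw [hE]
  rw [← h2]
  exact h1
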